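/- For any finite Markov chain with transition kernel K and any random mapping representation (g, W) of K with support Λ_W (the minimal set of coordinates that g(·,W) depends on), and any two distributions φ, ψ on the state space, the total variation distance ‖φK − ψK‖_TV is at most the integral over W of ‖φ|_{Λ_W} − ψ|_{Λ_W}‖_TV, where φ|_S denotes the projection (marginal) of φ onto the coordinates in S. -/
import Mathlib


open Finset

/-- Support lemma for random mapping representations: if `K` is a Markov kernel on
`Λ → Spin` with random mapping representation `(g, W)` (where `W` ranges over a finite
index type `ι` with probability weights `μW`), and `ΛW w` is the support of `g (·, w)`
(the set of coordinates it depends on), then for any two distributions `φ, ψ`,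
`‖φK − ψK‖_TV ≤ ∑_w μW w · ‖φ|_{ΛW w} − ψ|_{ΛW w}‖_TV`,
where `φ|_S` denotes the marginal of `φ` on the coordinates in `S`. -/
theorem stmt_0 {Spin Λ ι : Type*} [Fintype Spin] [Fintype Λ] [Fintype ι]
    [DecidableEq Spin] [DecidableEq Λ]
    (K : (Λ → Spin) → (Λ → Spin) → ℝ)
    (g : (Λ → Spin) → ι → (Λ → Spin))
    (μW : ι → ℝ) (hμW0 : ∀ w, 0 ≤ μW w) (hμW1 : ∑ w, μW w = 1)
    (hrep : ∀ x y, ∑ w, (if g x w = y then μW w else 0) = K x y)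
    (ΛW : ι → Finset Λ)
    (hΛW : ∀ w v, v ∈ ΛW w ↔
      ∃ x x' : Λ → Spin, (∀ u, u ≠ v → x u = x' u) ∧ g x w ≠ g x' w)
    (φ ψ : (Λ → Spin) → ℝ)
    (hφ0 : ∀ x, 0 ≤ φ x) (hφ1 : ∑ x, φ x = 1)
    (hψ0 : ∀ x, 0 ≤ ψ x) (hψ1 : ∑ x, ψ x = 1) :
    (1 / 2) * ∑ y, |(∑ x, φ x * K x y) - (∑ x, ψ x * K x y)| ≤
      ∑ w, μW w * ((1 / 2) * ∑ z : {v // v ∈ ΛW w} → Spin,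
        |(∑ x, if (∀ v : {v // v ∈ ΛW w}, x v.1 = z v) then φ x else 0) -
          (∑ x, if (∀ v : {v // v ∈ ΛW w}, x v.1 = z v) then ψ x else 0)|) := by
  classical
  set δ : (Λ → Spin) → ℝ := fun x => φ x - ψ x with hδ
  -- g (·, w) depends only on coordinates in ΛW w
  have hdep : ∀ w (x x' : Λ → Spin), (∀ v ∈ ΛW w, x v = x' v) → g x w = g x' w := by
    intro w
    have key : ∀ n (x x' : Λ → Spin),
        (univ.filter fun u => x u ≠ x' u).card ≤ n →
        (∀ v ∈ ΛW w, x v = x' v) → g x w = g x' w := by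
      intro n
      induction n with
      | zero =>
        intro x x' hcard hagree
        have hxx : x = x' := by
          funext u
          by_contra hu
          have hmem : u ∈ univ.filter fun u => x u ≠ x' u := by simp [hu]
          have := Finset.card_pos.mpr ⟨u, hmem⟩
          omega
        rw [hxx]
      | succ n ih =>
        intro x x' hcard hagree
        by_cases hxx : x = x'
        · rw [hxx]
        · have hex : ∃ v, x v ≠ x' v := by
            by_contra h
            push_neg at h
            exact hxx (funext h)
          obtain ⟨v, hv⟩ := hex
          have hvnot : v ∉ ΛW w := fun hmem => hv (hagree v hmem)
          have hstep : ∀ a b : Λ → Spin, (∀ u, u ≠ v → a u = b u) → g a w = g b w := by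
            intro a b hab
            by_contra hne
            exact hvnot ((hΛW w v).mpr ⟨a, b, hab, hne⟩)
          set x'' := Function.update x v (x' v) with hx''
          have h1 : g x w = g x'' w := by
            apply hstep
            intro u hu
            simp [hx'', Function.update_of_ne hu]
          have h2 : g x'' w = g x' w := by
            apply ih
            · have hsub : (univ.filter fun u => x'' u ≠ x' u) ⊆
                  (univ.filter fun u => x u ≠ x' u).erase v := by
                intro u hu
                simp only [mem_filter, mem_univ, true_and] at hu
                rcases eq_or_ne u v with rfl | huv
                · exact absurd (by simp [hx'']) hu
                · rw [hx'', Function.update_of_ne huv] at hu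
                  simp [mem_erase, huv, hu]
              have hle := card_le_card hsub
              have herase : ((univ.filter fun u => x u ≠ x' u).erase v).card
                  = (univ.filter fun u => x u ≠ x' u).card - 1 := by
                apply card_erase_of_mem; simp [hv]
              have hpos : 1 ≤ (univ.filter fun u => x u ≠ x' u).card :=
                card_pos.mpr ⟨v, by simp [hv]⟩
              omega
            · intro u hu
              rcases eq_or_ne u v with rfl | huv
              · simp [hx'']
              · rw [hx'', Function.update_of_ne huv]; exact hagree u hu
          rw [h1, h2]
    intro x x' h
    exact key _ x x' le_rfl h
  -- rewrite integrand on the left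
  have hswap : ∀ y, ((∑ x, φ x * K x y) - (∑ x, ψ x * K x y))
      = ∑ w, μW w * (∑ x, if g x w = y then δ x else 0) := by
    intro y
    rw [← Finset.sum_sub_distrib]
    calc ∑ x, (φ x * K x y - ψ x * K x y)
        = ∑ x, ∑ w, (if g x w = y then δ x * μW w else 0) := by
          apply Finset.sum_congr rfl; intro x _
          rw [← hrep x y, ← sub_mul, Finset.mul_sum]
          apply Finset.sum_congr rfl; intro w _
          simp only [hδ, mul_ite, mul_zero]
      _ = ∑ w, ∑ x, (if g x w = y then δ x * μW w else 0) := Finset.sum_comm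
      _ = ∑ w, μW w * ∑ x, (if g x w = y then δ x else 0) := by
          apply Finset.sum_congr rfl; intro w _
          rw [Finset.mul_sum]
          apply Finset.sum_congr rfl; intro x _
          split <;> ring
  -- per-w bound
  have hperw : ∀ w, ∑ y, |∑ x, if g x w = y then δ x else 0|
      ≤ ∑ z : {v // v ∈ ΛW w} → Spin, |∑ x, if (∀ v : {v // v ∈ ΛW w}, x v.1 = z v) then δ x else 0| := by
    intro w
    set r : (Λ → Spin) → ({v // v ∈ ΛW w} → Spin) := fun x v => x v.1 with hr
    have hcond : ∀ (x : Λ → Spin) (z : {v // v ∈ ΛW w} → Spin),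
        (∀ v : {v // v ∈ ΛW w}, x v.1 = z v) ↔ r x = z := by
      intro x z
      constructor
      · intro h; funext v; exact h v
      · intro h v; exact congrFun h v
    have hfib : ∀ (f : (Λ → Spin) → ℝ), (∑ x, f x)
        = ∑ z : {v // v ∈ ΛW w} → Spin, ∑ x, if r x = z then f x else 0 := by
      intro f
      rw [Finset.sum_comm]
      apply Finset.sum_congr rfl; intro x _
      simp [Finset.sum_ite_eq univ (r x)]
    calc ∑ y, |∑ x, if g x w = y then δ x else 0|
        = ∑ y, |∑ z : {v // v ∈ ΛW w} → Spin,
            ∑ x, if r x = z then (if g x w = y then δ x else 0) else 0| := by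
          apply Finset.sum_congr rfl; intro y _
          rw [hfib (fun x => if g x w = y then δ x else 0)]
      _ ≤ ∑ y, ∑ z : {v // v ∈ ΛW w} → Spin,
            |∑ x, if r x = z then (if g x w = y then δ x else 0) else 0| := by
          apply Finset.sum_le_sum; intro y _
          exact Finset.abs_sum_le_sum_abs _ _
      _ = ∑ z : {v // v ∈ ΛW w} → Spin, ∑ y,
            |∑ x, if r x = z then (if g x w = y then δ x else 0) else 0| := Finset.sum_comm
      _ ≤ ∑ z : {v // v ∈ ΛW w} → Spin, |∑ x, if r x = z then δ x else 0| := by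
          apply Finset.sum_le_sum; intro z _
          by_cases hz : ∃ x₀, r x₀ = z
          · refine le_of_eq ?_
            obtain ⟨x₀, hx₀⟩ := hz
            have hval : ∀ x, r x = z → g x w = g x₀ w := by
              intro x hx
              apply hdep
              intro v hv
              have h1 : x v = z ⟨v, hv⟩ := congrFun hx ⟨v, hv⟩
              have h2 : x₀ v = z ⟨v, hv⟩ := congrFun hx₀ ⟨v, hv⟩
              rw [h1, h2]
            have hinner : ∀ y, (∑ x, if r x = z then (if g x w = y then δ x else 0) else 0)
                = if g x₀ w = y then (∑ x, if r x = z then δ x else 0) else 0 := by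
              intro y
              by_cases hy : g x₀ w = y
              · simp only [hy, if_true]
                apply Finset.sum_congr rfl; intro x _
                by_cases hx : r x = z
                · simp [hx, hval x hx, hy]
                · simp [hx]
              · simp only [hy, if_false]
                apply Finset.sum_eq_zero; intro x _
                by_cases hx : r x = z
                · simp [hx, hval x hx, hy]
                · simp [hx]
            calc ∑ y, |∑ x, if r x = z then (if g x w = y then δ x else 0) else 0|
                = ∑ y, if g x₀ w = y then |∑ x, if r x = z then δ x else 0| else 0 := by
                  apply Finset.sum_congr rfl; intro y _
                  rw [hinner y]
                  split <;> simp
              _ = |∑ x, if r x = z then δ x else 0| := by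
                  simp [Finset.sum_ite_eq univ (g x₀ w)]
          · push_neg at hz
            have hzero : ∀ (f : (Λ → Spin) → ℝ), (∑ x, if r x = z then f x else 0) = 0 := by
              intro f
              apply Finset.sum_eq_zero; intro x _
              simp [hz x]
            rw [hzero]
            simp [hzero]
      _ = ∑ z : {v // v ∈ ΛW w} → Spin, |∑ x, if (∀ v : {v // v ∈ ΛW w}, x v.1 = z v) then δ x else 0| := by
          apply Finset.sum_congr rfl; intro z _
          congr 1
          apply Finset.sum_congr rfl; intro x _
          exact (if_congr (hcond x z) rfl rfl).symm
  -- combine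
  have hrhs : ∀ (w : ι) (z : {v // v ∈ ΛW w} → Spin),
      ((∑ x, if (∀ v : {v // v ∈ ΛW w}, x v.1 = z v) then φ x else 0) -
        (∑ x, if (∀ v : {v // v ∈ ΛW w}, x v.1 = z v) then ψ x else 0))
      = ∑ x, if (∀ v : {v // v ∈ ΛW w}, x v.1 = z v) then δ x else 0 := by
    intro w z
    rw [← Finset.sum_sub_distrib]
    apply Finset.sum_congr rfl; intro x _
    split <;> simp [hδ]
  calc (1 / 2) * ∑ y, |(∑ x, φ x * K x y) - (∑ x, ψ x * K x y)|
      = (1 / 2) * ∑ y, |∑ w, μW w * (∑ x, if g x w = y then δ x else 0)| := by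
        rw [show (∑ y, |(∑ x, φ x * K x y) - (∑ x, ψ x * K x y)|) = ∑ y, |∑ w, μW w * (∑ x, if g x w = y then δ x else 0)| from Finset.sum_congr rfl fun y _ => by rw [hswap y]]
    _ ≤ (1 / 2) * ∑ y, ∑ w, |μW w * (∑ x, if g x w = y then δ x else 0)| := by
        apply mul_le_mul_of_nonneg_left _ (by norm_num)
        apply Finset.sum_le_sum; intro y _
        exact Finset.abs_sum_le_sum_abs _ _
    _ = ∑ w, μW w * ((1 / 2) * ∑ y, |∑ x, if g x w = y then δ x else 0|) := by
        rw [Finset.sum_comm, Finset.mul_sum]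
        apply Finset.sum_congr rfl; intro w _
        rw [Finset.mul_sum, Finset.mul_sum, Finset.mul_sum]
        apply Finset.sum_congr rfl; intro y _
        rw [abs_mul, abs_of_nonneg (hμW0 w)]
        ring
    _ ≤ ∑ w, μW w * ((1 / 2) * ∑ z : {v // v ∈ ΛW w} → Spin,
        |(∑ x, if (∀ v : {v // v ∈ ΛW w}, x v.1 = z v) then φ x else 0) -
          (∑ x, if (∀ v : {v // v ∈ ΛW w}, x v.1 = z v) then ψ x else 0)|) := by
        apply Finset.sum_le_sum; intro w _
        apply mul_le_mul_of_nonneg_left _ (hμW0 w)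
        apply mul_le_mul_of_nonneg_left _ (by norm_num : (0:ℝ) ≤ 1/2)
        calc ∑ y, |∑ x, if g x w = y then δ x else 0|
            ≤ ∑ z : {v // v ∈ ΛW w} → Spin, |∑ x, if (∀ v : {v // v ∈ ΛW w}, x v.1 = z v) then δ x else 0| := hperw w
          _ = ∑ z : {v // v ∈ ΛW w} → Spin,
              |(∑ x, if (∀ v : {v // v ∈ ΛW w}, x v.1 = z v) then φ x else 0) -
                (∑ x, if (∀ v : {v // v ∈ ΛW w}, x v.1 = z v) then ψ x else 0)| := by
              apply Finset.sum_congr rfl; intro z _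
              rw [hrhs w z]
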